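/- Let (X̃,d) be a geodesic metric space, X ⊆ X̃ a finite subset of even cardinality, and g : X̃ → ℝ a 1-Lipschitz function. Then ∫_ℝ Cut_{Z2}(g^{-1}(t), X) dt ≤ m(X,d), where m(X,d) is the matching number of X with the induced metric. -/

import Mathlib

open MeasureTheory
open scoped ENNReal

/-- A matching on `X`: a partition of `X` into two-element subsets,
encoded as a fixed-point-free involution. -/
def IsMatching {X : Type*} (π : X → X) : Prop :=
  Function.Involutive π ∧ ∀ x, π x ≠ x

/-- The matching number of a matching `π` with respect to `d`:
`∑_{{x,y} ∈ π} d(x,y)` (each pair is counted twice in the sum, whence the division). -/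
noncomputable def matchVal {X : Type*} [Fintype X] (d : X → X → ℝ) (π : X → X) : ℝ :=
  (∑ x, d x (π x)) / 2

/-- The matching number `m(X,d)`: the minimum of `m(π,d)` over all matchings `π` on `X`. -/
noncomputable def matchNum {X : Type*} [Fintype X] (d : X → X → ℝ) : ℝ :=
  sInf {r | ∃ π : X → X, IsMatching π ∧ r = matchVal d π}

/-- `d` is a pseudometric on `X`. -/
def IsPseudometric {X : Type*} (d : X → X → ℝ) : Prop :=
  (∀ x, d x x = 0) ∧ (∀ x y, d x y = d y x) ∧ ∀ x y z, d x z ≤ d x y + d y z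

/-- A metric space is geodesic if any two points `x`, `y` are joined by an isometric
embedding of the interval `[0, dist x y]`. -/
def IsGeodesicSpace (T : Type*) [MetricSpace T] : Prop :=
  ∀ x y : T, ∃ γ : ℝ → T, γ 0 = x ∧ γ (dist x y) = y ∧
    ∀ s ∈ Set.Icc (0 : ℝ) (dist x y), ∀ t ∈ Set.Icc (0 : ℝ) (dist x y),
      dist (γ s) (γ t) = |s - t|

/-- The four-point (tree-likeness) condition for a metric space. -/
def FourPointCond (T : Type*) [MetricSpace T] : Prop :=
  ∀ x₁ x₂ x₃ x₄ : T, dist x₁ x₃ + dist x₂ x₄ ≤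
    max (dist x₁ x₂ + dist x₃ x₄) (dist x₁ x₄ + dist x₂ x₃)

/-- A metric tree: a complete geodesic metric space satisfying the four-point condition. -/
def IsMetricTree (T : Type*) [MetricSpace T] : Prop :=
  CompleteSpace T ∧ IsGeodesicSpace T ∧ FourPointCond T

/-- `A` is a `ℤ₂`-cut of the finite set `X ⊆ Y` if some connected component of `Y \ A`
contains an odd number of points of `X`. -/
def IsZ2Cut {Y : Type*} [TopologicalSpace Y] (A : Set Y) (X : Finset Y) : Prop :=
  ∃ p ∈ Aᶜ, Odd (Set.ncard {x : Y | x ∈ X ∧ x ∈ connectedComponentIn Aᶜ p})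

/-- `Cut_{ℤ₂}(A, X)`: the number of connected components of `A` that are `ℤ₂`-cuts of `X`. -/
noncomputable def cutZ2 {Y : Type*} [TopologicalSpace Y] (A : Set Y) (X : Finset Y) : ℝ≥0∞ :=
  (Set.encard {C : Set Y |
    (∃ p ∈ A, C = connectedComponentIn A p) ∧ IsZ2Cut C X} : ℕ∞)


section AuxProof
open Filter MeasureTheory Set


lemma pairing {α : Type*} [DecidableEq α] (π : α → α) (hinv : ∀ x, π (π x) = x) :
    ∀ s : Finset α, (∀ x ∈ s, π x ∈ s) → (∀ x ∈ s, π x ≠ x) →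
    ∃ R : Finset α, R ⊆ s ∧ (∀ x ∈ s, (x ∈ R ↔ π x ∉ R)) ∧ s.card = 2 * R.card := by
  intro s
  induction s using Finset.strongInduction with
  | _ s ih =>
    intro hmem hne
    rcases s.eq_empty_or_nonempty with rfl | ⟨x, hx⟩
    · exact ⟨∅, by simp⟩
    · have hπx : π x ∈ s := hmem x hx
      have hπxne : π x ≠ x := hne x hx
      set s' := (s.erase x).erase (π x) with hs'
      have hsub' : s' ⊆ s := (Finset.erase_subset _ _).trans (Finset.erase_subset _ _)
      have hss : s' ⊂ s := by
        refine Finset.ssubset_iff_of_subset hsub' |>.mpr ⟨x, hx, ?_⟩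
        simp [hs']
      have hmem' : ∀ y ∈ s', π y ∈ s' := by
        intro y hy
        have hys : y ∈ s := hsub' hy
        have h1 : y ≠ x := by
          intro h; rw [h] at hy; simp [hs'] at hy
        have h2 : y ≠ π x := by
          intro h; rw [h] at hy; simp [hs'] at hy
        have hπys : π y ∈ s := hmem y hys
        simp only [hs', Finset.mem_erase]
        refine ⟨?_, ?_, hπys⟩
        · intro h
          exact h1 (by calc y = π (π y) := (hinv y).symm
                      _ = π (π x) := by rw [h]
                      _ = x := hinv x)
        · intro h
          exact h2 (by calc y = π (π y) := (hinv y).symm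
                      _ = π x := by rw [h])
      have hne' : ∀ y ∈ s', π y ≠ y := fun y hy => hne y (hsub' hy)
      obtain ⟨R, hRsub, hRiff, hcard⟩ := ih s' hss hmem' hne'
      have hxR : x ∉ R := fun h => by
        have := hRsub h; simp [hs'] at this
      have hπxR : π x ∉ R := fun h => by
        have := hRsub h; simp [hs'] at this
      have hπxnotins : π x ∉ insert x R := by
        intro h
        rcases Finset.mem_insert.mp h with h | h
        · exact hπxne h
        · exact hπxR h
      refine ⟨insert x R, ?_, ?_, ?_⟩
      · intro y hy
        rcases Finset.mem_insert.mp hy with rfl | hy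
        · exact hx
        · exact hsub' (hRsub hy)
      · intro y hy
        rcases eq_or_ne y x with rfl | hyx
        · exact ⟨fun _ => hπxnotins, fun _ => Finset.mem_insert_self _ _⟩
        rcases eq_or_ne y (π x) with rfl | hyπx
        · have h1 : π x ∉ insert x R := hπxnotins
          have h2 : π (π x) ∈ insert x R := by
            rw [hinv]; exact Finset.mem_insert_self _ _
          exact ⟨fun h => absurd h h1, fun h => absurd h2 h⟩
        · have hys' : y ∈ s' := by
            simp [hs', hyx, hyπx, hy]
          have hπyx : π y ≠ x := by
            intro h
            exact hyπx (by calc y = π (π y) := (hinv y).symm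
                          _ = π x := by rw [h])
          have hiff := hRiff y hys'
          constructor
          · intro h hc
            rcases Finset.mem_insert.mp hc with h' | h'
            · exact hπyx h'
            · rcases Finset.mem_insert.mp h with h'' | h''
              · exact hyx h''
              · exact (hiff.mp h'') h'
          · intro h
            apply Finset.mem_insert_of_mem
            apply hiff.mpr
            intro hc
            exact h (Finset.mem_insert_of_mem hc)
      · have hc1 : s.card = s'.card + 2 := by
          have h1 : (s.erase x).card = s.card - 1 := Finset.card_erase_of_mem hx
          have h2 : s'.card = (s.erase x).card - 1 :=
            Finset.card_erase_of_mem (Finset.mem_erase.mpr ⟨hπxne, hπx⟩)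
          have hpos : 1 ≤ s.card := Finset.card_pos.mpr ⟨x, hx⟩
          have hpos2 : 1 ≤ (s.erase x).card :=
            Finset.card_pos.mpr ⟨π x, Finset.mem_erase.mpr ⟨hπxne, hπx⟩⟩
          omega
        rw [hc1, hcard, Finset.card_insert_of_notMem hxR]
        ring

lemma matching_exists {α : Type*} [Fintype α] (h : Even (Fintype.card α)) :
    ∃ π : α → α, IsMatching π := by
  obtain ⟨n, hn⟩ := h
  have hcard : Fintype.card α = Fintype.card (Fin n × Fin 2) := by
    simp [Fintype.card_prod]; omega
  let e := Fintype.equivOfCardEq hcard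
  have key : ∀ b : Fin 2, b + 1 ≠ b := by decide
  have key2 : ∀ b : Fin 2, b + 1 + 1 = b := by decide
  refine ⟨fun a => e.symm ((e a).1, (e a).2 + 1), ?_, ?_⟩
  · intro a
    simp [Equiv.apply_symm_apply, key2]
  · intro a h
    apply_fun e at h
    simp only [Equiv.apply_symm_apply] at h
    exact key _ (congrArg Prod.snd h)

lemma compIn_eq_of_mem {α : Type*} [TopologicalSpace α] {A : Set α} {s s' q : α}
    (hq : q ∈ connectedComponentIn A s) (hq' : q ∈ connectedComponentIn A s') :
    connectedComponentIn A s = connectedComponentIn A s' := by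
  rw [connectedComponentIn_eq hq, connectedComponentIn_eq hq']

lemma majorant (L : ℝ) (hL : 0 ≤ L) (h : ℝ → ℝ)
    (hh : ∀ s ∈ Set.Icc 0 L, ∀ u ∈ Set.Icc 0 L, |h s - h u| ≤ |s - u|) :
    ∃ M : ℝ → ℝ≥0∞, Measurable M ∧
      (∀ t : ℝ, ((Set.encard {K : Set ℝ | ∃ s ∈ Set.Icc 0 L ∩ h ⁻¹' {t},
          K = connectedComponentIn (Set.Icc 0 L ∩ h ⁻¹' {t}) s} : ℕ∞) : ℝ≥0∞) ≤ M t) ∧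
      ∫⁻ t, M t ≤ ENNReal.ofReal L := by
  classical
  have hcont : ContinuousOn h (Set.Icc 0 L) := by
    apply (lipschitzOnWith_iff_dist_le_mul.mpr ?_).continuousOn (K := 1)
    intro x hx y hy
    rw [Real.dist_eq, Real.dist_eq, NNReal.coe_one, one_mul]
    exact hh x hx y hy
  set δ : ℕ → ℝ := fun n => L / 2 ^ n with hδdef
  have hδ0 : ∀ n, 0 ≤ δ n := fun n => div_nonneg hL (by positivity)
  set I : ℕ → ℕ → Set ℝ := fun n i => Set.Icc (i * δ n) ((i + 1) * δ n) with hIdef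
  have hIlen : ∀ n i, ∀ x ∈ I n i, ∀ y ∈ I n i, |x - y| ≤ δ n := by
    intro n i x hx y hy
    rw [abs_le]
    simp only [hIdef, Set.mem_Icc] at hx hy
    constructor <;> nlinarith [hx.1, hx.2, hy.1, hy.2]
  have hIsub : ∀ n, ∀ i, i < 2 ^ n → I n i ⊆ Set.Icc 0 L := by
    intro n i hi x hx
    simp only [hIdef, Set.mem_Icc] at hx
    have h1 : (0:ℝ) ≤ i * δ n := mul_nonneg (by positivity) (hδ0 n)
    have h2 : ((i:ℝ) + 1) * δ n ≤ L := by
      have : ((i:ℝ) + 1) ≤ 2 ^ n := by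
        have : (i:ℝ) + 1 ≤ ((2:ℝ) ^ n : ℝ) := by exact_mod_cast Nat.succ_le_of_lt hi
        exact this
      have h2n : (0:ℝ) < 2 ^ n := by positivity
      calc ((i:ℝ) + 1) * δ n ≤ 2 ^ n * δ n :=
            mul_le_mul_of_nonneg_right this (hδ0 n)
        _ = L := by simp only [hδdef]; field_simp
    exact ⟨le_trans h1 hx.1, le_trans hx.2 h2⟩
  have himg_meas : ∀ n, ∀ i, i < 2 ^ n → MeasurableSet (h '' I n i) := by
    intro n i hi
    exact ((isCompact_Icc.image_of_continuousOn (hcont.mono (hIsub n i hi)))).isClosed.measurableSet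
  set F : ℕ → ℝ → ℝ≥0∞ := fun n t =>
    ∑ i ∈ Finset.range (2 ^ n), (h '' I n i).indicator (fun _ => (1 : ℝ≥0∞)) t with hFdef
  have hFmeas : ∀ n, Measurable (F n) := by
    intro n
    apply Finset.measurable_sum
    intro i hi
    exact measurable_const.indicator (himg_meas n i (Finset.mem_range.mp hi))
  have hFint : ∀ n, ∫⁻ t, F n t ≤ ENNReal.ofReal L := by
    intro n
    rw [hFdef]
    simp only
    rw [MeasureTheory.lintegral_finset_sum _
      (fun i hi => measurable_const.indicator (himg_meas n i (Finset.mem_range.mp hi)))]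
    have hvol : ∀ i ∈ Finset.range (2 ^ n),
        (∫⁻ t, (h '' I n i).indicator (fun _ => (1:ℝ≥0∞)) t) ≤ ENNReal.ofReal (δ n) := by
      intro i hi
      have hms := himg_meas n i (Finset.mem_range.mp hi)
      have : (∫⁻ t, (h '' I n i).indicator (fun _ => (1:ℝ≥0∞)) t) = volume (h '' I n i) := by
        exact MeasureTheory.lintegral_indicator_one (μ := volume) hms
      rw [this]
      -- image has diameter ≤ δ n
      have hne : (I n i).Nonempty := by
        refine ⟨i * δ n, ?_⟩
        simp only [hIdef, Set.mem_Icc, le_refl, true_and]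
        nlinarith [hδ0 n]
      obtain ⟨u₀, hu₀, hmin⟩ := isCompact_Icc.exists_isMinOn hne
        (hcont.mono (hIsub n i (Finset.mem_range.mp hi)))
      have himgsub : h '' I n i ⊆ Set.Icc (h u₀) (h u₀ + δ n) := by
        rintro v ⟨u, hu, rfl⟩
        refine ⟨hmin hu, ?_⟩
        have h1 : |h u - h u₀| ≤ |u - u₀| :=
          hh u (hIsub n i (Finset.mem_range.mp hi) hu) u₀ (hIsub n i (Finset.mem_range.mp hi) hu₀)
        have h2 : |u - u₀| ≤ δ n := hIlen n i u hu u₀ hu₀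
        have := (abs_le.mp (h1.trans h2)).2
        linarith
      calc volume (h '' I n i) ≤ volume (Set.Icc (h u₀) (h u₀ + δ n)) :=
            measure_mono himgsub
        _ = ENNReal.ofReal (δ n) := by rw [Real.volume_Icc]; ring_nf
    calc (∑ i ∈ Finset.range (2 ^ n), ∫⁻ t, (h '' I n i).indicator (fun _ => (1:ℝ≥0∞)) t)
        ≤ ∑ _i ∈ Finset.range (2 ^ n), ENNReal.ofReal (δ n) := Finset.sum_le_sum hvol
      _ = (2 ^ n : ℕ) * ENNReal.ofReal (δ n) := by
          rw [Finset.sum_const, Finset.card_range, nsmul_eq_mul]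
      _ = ENNReal.ofReal ((2 ^ n : ℕ) * δ n) := by
          rw [ENNReal.ofReal_mul (by positivity), ENNReal.ofReal_natCast]
      _ = ENNReal.ofReal L := by
          congr 1
          push_cast
          simp only [hδdef]; field_simp
  refine ⟨fun t => liminf (fun n => F n t) atTop, ?_, ?_, ?_⟩
  · exact .liminf hFmeas
  · intro t
    set A : Set ℝ := Set.Icc 0 L ∩ h ⁻¹' {t} with hAdef
    set S : Set (Set ℝ) := {K | ∃ s ∈ A, K = connectedComponentIn A s} with hSdef
    have claim : ∀ k : ℕ, (k : ℕ∞) ≤ S.encard →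
        (k : ℝ≥0∞) ≤ liminf (fun n => F n t) atTop := by
      intro k hk
      obtain ⟨T, hTsub, hTenc⟩ := Set.exists_subset_encard_eq hk
      have hTfin : T.Finite := Set.finite_of_encard_eq_coe hTenc
      have hTne : ∀ K ∈ T, K.Nonempty := by
        intro K hK
        obtain ⟨s, hs, rfl⟩ := hTsub hK
        exact ⟨s, mem_connectedComponentIn hs⟩
      set c : Set ℝ → ℝ := fun K => if hK : K.Nonempty then hK.some else 0 with hcdef
      have hc : ∀ K ∈ T, c K ∈ K := by
        intro K hK
        have hne := hTne K hK
        simp only [hcdef, dif_pos hne]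
        exact hne.some_mem
      have hcA : ∀ K ∈ T, c K ∈ A := by
        intro K hK
        obtain ⟨s, hs, hKeq⟩ := hTsub hK
        have hKA : K ⊆ A := by
          rw [hKeq]; exact connectedComponentIn_subset _ _
        exact hKA (hc K hK)
      have hcinj : ∀ K ∈ T, ∀ K' ∈ T, K ≠ K' → c K ≠ c K' := by
        intro K hK K' hK' hne heq
        obtain ⟨s, hs, hKeq⟩ := hTsub hK
        obtain ⟨s', hs', hKeq'⟩ := hTsub hK'
        apply hne
        rw [hKeq, hKeq']
        have h1 : c K ∈ connectedComponentIn A s := by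
          rw [← hKeq]; exact hc K hK
        have h2 : c K ∈ connectedComponentIn A s' := by
          rw [heq, ← hKeq']; exact hc K' hK'
        exact compIn_eq_of_mem h1 h2
      set Tf := hTfin.toFinset with hTfdef
      have hTfcard : Tf.card = k := by
        have h1 := hTfin.encard_eq_coe_toFinset_card
        rw [hTenc] at h1
        exact_mod_cast h1.symm
      obtain ⟨δ₀, hδ₀pos, hδ₀⟩ :
          ∃ δ₀ > 0, ∀ K ∈ Tf, ∀ K' ∈ Tf, K ≠ K' → δ₀ ≤ |c K - c K'| := by
        rcases ((Tf ×ˢ Tf).filter (fun p => p.1 ≠ p.2)).eq_empty_or_nonempty with hQ | hQ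
        · refine ⟨1, one_pos, fun K hK K' hK' hne => ?_⟩
          exfalso
          have hmem : (K, K') ∈ (Tf ×ˢ Tf).filter (fun p => p.1 ≠ p.2) := by
            simp only [Finset.mem_filter, Finset.mem_product]
            exact ⟨⟨hK, hK'⟩, hne⟩
          rw [hQ] at hmem
          exact Finset.notMem_empty _ hmem
        · refine ⟨((Tf ×ˢ Tf).filter (fun p => p.1 ≠ p.2)).inf' hQ
            (fun p => |c p.1 - c p.2|), ?_, ?_⟩
          · rw [gt_iff_lt, Finset.lt_inf'_iff]
            intro p hp
            rw [Finset.mem_filter, Finset.mem_product] at hp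
            refine abs_pos.mpr (sub_ne_zero.mpr ?_)
            exact hcinj p.1 (hTfin.mem_toFinset.mp hp.1.1) p.2
              (hTfin.mem_toFinset.mp hp.1.2) hp.2
          · intro K hK K' hK' hne
            exact Finset.inf'_le (f := fun p : Set ℝ × Set ℝ => |c p.1 - c p.2|)
              (b := (K, K'))
              (by rw [Finset.mem_filter, Finset.mem_product]; exact ⟨⟨hK, hK'⟩, hne⟩)
      have hmesh : ∀ᶠ n in atTop, δ n < δ₀ := by
        have htend : Tendsto δ atTop (nhds 0) := by
          have hrw : δ = fun n => L * (1/2 : ℝ)^n := by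
            funext n
            rw [hδdef]
            simp only
            rw [div_pow, one_pow]
            ring
          rw [hrw]
          have := (tendsto_pow_atTop_nhds_zero_of_lt_one
            (by norm_num : (0:ℝ) ≤ 1/2) (by norm_num : (1/2:ℝ) < 1)).const_mul L
          simpa using this
        exact htend.eventually_lt_const hδ₀pos
      apply Filter.le_liminf_of_le (by isBoundedDefault)
      filter_upwards [hmesh] with n hn
      have hcover : ∀ s ∈ Set.Icc (0:ℝ) L, ∃ i, i < 2 ^ n ∧ s ∈ I n i := by
        intro s hs
        rcases eq_or_lt_of_le hL with hL0 | hLpos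
        · refine ⟨0, by positivity, ?_⟩
          have hs0 : s = 0 := le_antisymm (hs.2.trans (by rw [← hL0])) hs.1
          simp only [hIdef, Set.mem_Icc, hs0]
          constructor
          · simp
          · have := hδ0 n
            push_cast
            linarith
        · have hδpos : 0 < δ n := div_pos hLpos (by positivity)
          have hsd0 : (0:ℝ) ≤ s / δ n := div_nonneg hs.1 hδpos.le
          set j : ℕ := (⌊s / δ n⌋).toNat with hjdef
          have hjcast : (j : ℝ) = ⌊s / δ n⌋ := by
            rw [hjdef]
            exact_mod_cast congrArg (Int.cast : ℤ → ℝ)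
              (Int.toNat_of_nonneg (Int.floor_nonneg.mpr hsd0))
          by_cases hj : j < 2 ^ n
          · refine ⟨j, hj, ?_⟩
            constructor
            · have h1 : (j:ℝ) ≤ s / δ n := hjcast ▸ Int.floor_le (s / δ n)
              calc (j:ℝ) * δ n ≤ (s / δ n) * δ n :=
                    mul_le_mul_of_nonneg_right h1 hδpos.le
                _ = s := by field_simp
            · have h1 : s / δ n < (j:ℝ) + 1 := by
                rw [hjcast]
                exact Int.lt_floor_add_one (s / δ n)
              have := (div_lt_iff₀ hδpos).mp h1
              linarith
          · have h1n : (1:ℕ) ≤ 2 ^ n := Nat.one_le_two_pow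
            refine ⟨2 ^ n - 1, by omega, ?_⟩
            have h2n1 : ((2 ^ n - 1 : ℕ) : ℝ) = (2:ℝ) ^ n - 1 := by
              push_cast [h1n]
              ring
            have hLeq : (2:ℝ) ^ n * δ n = L := by
              rw [hδdef]
              field_simp
            constructor
            · have hj2 : (2 ^ n : ℝ) ≤ (j : ℝ) := by exact_mod_cast Nat.le_of_not_lt hj
              have h1 : (j:ℝ) ≤ s / δ n := hjcast ▸ Int.floor_le (s / δ n)
              have h2 : ((2:ℝ) ^ n - 1) ≤ s / δ n := by push_cast at hj2 ⊢; linarith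
              rw [h2n1]
              calc ((2:ℝ) ^ n - 1) * δ n ≤ (s / δ n) * δ n :=
                    mul_le_mul_of_nonneg_right h2 hδpos.le
                _ = s := by field_simp
            · rw [h2n1]
              have : ((2:ℝ) ^ n - 1 + 1) * δ n = L := by rw [← hLeq]; ring
              rw [this]
              exact hs.2
      have hex : ∀ K ∈ Tf, ∃ i, i < 2 ^ n ∧ c K ∈ I n i := by
        intro K hK
        exact hcover (c K) (hcA K (hTfin.mem_toFinset.mp hK)).1
      set φ : Set ℝ → ℕ :=
        fun K => if hK : ∃ i, i < 2 ^ n ∧ c K ∈ I n i then hK.choose else 0 with hφdef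
      have hφ : ∀ K ∈ Tf, φ K < 2 ^ n ∧ c K ∈ I n (φ K) := by
        intro K hK
        have hx := hex K hK
        simp only [hφdef, dif_pos hx]
        exact hx.choose_spec
      set tgt := (Finset.range (2 ^ n)).filter (fun i => t ∈ h '' I n i) with htgtdef
      have hmap : ∀ K ∈ Tf, φ K ∈ tgt := by
        intro K hK
        have hKT := hTfin.mem_toFinset.mp hK
        refine Finset.mem_filter.mpr ⟨Finset.mem_range.mpr (hφ K hK).1, ?_⟩
        refine ⟨c K, (hφ K hK).2, ?_⟩
        have := (hcA K hKT).2
        simpa using this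
      have hinj : Set.InjOn φ ↑Tf := by
        intro K hK K' hK' heq
        by_contra hne
        have hKf : K ∈ Tf := hK
        have hKf' : K' ∈ Tf := hK'
        have h1 := (hφ K hKf).2
        have h2 := (hφ K' hKf').2
        rw [heq] at h1
        have h3 : |c K - c K'| ≤ δ n := hIlen n (φ K') (c K) h1 (c K') h2
        have h4 : δ₀ ≤ |c K - c K'| := hδ₀ K hKf K' hKf' hne
        linarith
      have hcard : k ≤ tgt.card := by
        rw [← hTfcard]
        exact Finset.card_le_card_of_injOn φ hmap hinj
      have hF : (tgt.card : ℝ≥0∞) ≤ F n t := by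
        rw [hFdef]
        simp only
        rw [show (∑ i ∈ Finset.range (2 ^ n),
              (h '' I n i).indicator (fun _ => (1:ℝ≥0∞)) t)
            = ∑ i ∈ Finset.range (2 ^ n), if t ∈ h '' I n i then (1:ℝ≥0∞) else 0 from
          Finset.sum_congr rfl (fun i _ => Set.indicator_apply _ _ _)]
        rw [Finset.sum_boole]
      calc (k : ℝ≥0∞) ≤ (tgt.card : ℝ≥0∞) := by exact_mod_cast hcard
        _ ≤ F n t := hF
    by_cases hfin : S.Finite
    · rw [hfin.encard_eq_coe_toFinset_card, ENat.toENNReal_coe]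
      exact claim _ (le_of_eq hfin.encard_eq_coe_toFinset_card.symm)
    · rw [Set.Infinite.encard_eq hfin]
      rw [ENat.toENNReal_top]
      rw [← ENNReal.iSup_natCast]
      exact iSup_le fun k => claim k (by rw [Set.Infinite.encard_eq hfin]; exact le_top)
  · calc (∫⁻ t, liminf (fun n => F n t) atTop)
        ≤ liminf (fun n => ∫⁻ t, F n t) atTop := MeasureTheory.lintegral_liminf_le hFmeas
      _ ≤ liminf (fun _ => ENNReal.ofReal L) atTop :=
          Filter.liminf_le_liminf (Filter.Eventually.of_forall hFint)
      _ = ENNReal.ofReal L := Filter.liminf_const _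


lemma encard_biUnion_le {α β : Type*} (R : Finset α) (f : α → Set β) (M : α → ℝ≥0∞)
    (hM : ∀ r ∈ R, (((f r).encard : ℕ∞) : ℝ≥0∞) ≤ M r) :
    (((⋃ r ∈ R, f r).encard : ℕ∞) : ℝ≥0∞) ≤ ∑ r ∈ R, M r := by
  classical
  revert hM
  induction R using Finset.induction with
  | empty => intro _; simp
  | @insert a s ha ih =>
    intro hM
    rw [Finset.sum_insert ha, Finset.set_biUnion_insert]
    calc (((f a ∪ ⋃ r ∈ s, f r).encard : ℕ∞) : ℝ≥0∞)
        ≤ ((((f a).encard + (⋃ r ∈ s, f r).encard : ℕ∞)) : ℝ≥0∞) :=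
          ENat.toENNReal_le.mpr (Set.encard_union_le _ _)
      _ = (((f a).encard : ℕ∞) : ℝ≥0∞) + (((⋃ r ∈ s, f r).encard : ℕ∞) : ℝ≥0∞) :=
          ENat.toENNReal_add _ _
      _ ≤ M a + ∑ r ∈ s, M r := add_le_add (hM a (Finset.mem_insert_self a s))
          (ih (fun r hr => hM r (Finset.mem_insert_of_mem hr)))


end AuxProof

/-- Let `(Y,d)` be a geodesic metric space, `X ⊆ Y` a finite subset of even cardinality and
`g : Y → ℝ` a `1`-Lipschitz function.  Then `∫_ℝ Cut_{ℤ₂}(g⁻¹(t), X) dt ≤ m(X,d)`. -/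
theorem stmt12 {Y : Type*} [MetricSpace Y] (hgeo : IsGeodesicSpace Y)
    (X : Finset Y) (hX : Even X.card) (g : Y → ℝ) (hg : LipschitzWith 1 g) :
    (∫⁻ t : ℝ, cutZ2 (g ⁻¹' {t}) X) ≤
      ENNReal.ofReal (matchNum (fun x y : ↥X => dist x.1 y.1)) := by
  classical
  set d : ↥X → ↥X → ℝ := fun x y => dist x.1 y.1 with hddef
  have key : ∀ π : ↥X → ↥X, IsMatching π →
      (∫⁻ t : ℝ, cutZ2 (g ⁻¹' {t}) X) ≤ ENNReal.ofReal (matchVal d π) := by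
    intro π hπ
    obtain ⟨hinv, hnefix⟩ := hπ
    obtain ⟨R, hRsub, hRiff, hRcard⟩ :=
      pairing π hinv Finset.univ (fun x _ => Finset.mem_univ _) (fun x _ => hnefix x)
    set L : ↥X → ℝ := fun r => dist (r : Y) ((π r : ↥X) : Y) with hLdef
    have hL0 : ∀ r, 0 ≤ L r := fun r => dist_nonneg
    have hgeod := fun r : ↥X => hgeo (r : Y) ((π r : ↥X) : Y)
    choose γ hγ0 hγ1 hγiso using hgeod
    set h : ↥X → ℝ → ℝ := fun r => g ∘ γ r with hhdef
    have hγcont : ∀ r, ContinuousOn (γ r) (Set.Icc 0 (L r)) := by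
      intro r
      apply (lipschitzOnWith_iff_dist_le_mul.mpr ?_).continuousOn (K := 1)
      intro x hx y hy
      rw [hγiso r x hx y hy, NNReal.coe_one, one_mul, Real.dist_eq]
    have hh : ∀ r, ∀ s ∈ Set.Icc 0 (L r), ∀ u ∈ Set.Icc 0 (L r),
        |h r s - h r u| ≤ |s - u| := by
      intro r s hs u hu
      have h1 : dist (g (γ r s)) (g (γ r u)) ≤ 1 * dist (γ r s) (γ r u) :=
        hg.dist_le_mul _ _
      rw [one_mul, hγiso r s hs u hu, Real.dist_eq] at h1
      exact h1
    choose M hMmeas hMbound hMint using fun r : ↥X => majorant (L r) (hL0 r) (h r) (hh r)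
    -- pointwise bound
    have hpt : ∀ t : ℝ, cutZ2 (g ⁻¹' {t}) X ≤ ∑ r ∈ R, M r t := by
      intro t
      set A : Set Y := g ⁻¹' {t} with hAdef
      set S : Set (Set Y) :=
        {C | (∃ p ∈ A, C = connectedComponentIn A p) ∧ IsZ2Cut C X} with hSdef
      have hcut : cutZ2 (g ⁻¹' {t}) X = ((S.encard : ℕ∞) : ℝ≥0∞) := rfl
      set B : ↥X → Set ℝ := fun r => Set.Icc 0 (L r) ∩ h r ⁻¹' {t} with hBdef
      set comps : ↥X → Set (Set ℝ) :=
        fun r => {K | ∃ s ∈ B r, K = connectedComponentIn (B r) s} with hcompsdef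
      -- step 1: each cut component is met by some geodesic of the matching
      have hstep : ∀ C ∈ S, ∃ r ∈ R, ∃ s₀ ∈ Set.Icc 0 (L r), γ r s₀ ∈ C := by
        intro C hC
        obtain ⟨⟨p₀, hp₀A, hCeq⟩, q, hqC, hodd⟩ := hC
        set O : Set Y := connectedComponentIn Cᶜ q with hOdef
        have hexξ : ∃ ξ : ↥X, (ξ : Y) ∈ O ∧ ((π ξ : ↥X) : Y) ∉ O := by
          by_contra hcon
          push_neg at hcon
          set Fs : Finset ↥X := Finset.univ.filter (fun x => (x : Y) ∈ O) with hFsdef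
          have hFsmem : ∀ x ∈ Fs, π x ∈ Fs := by
            intro x hx
            have hxO : (x : Y) ∈ O := (Finset.mem_filter.mp hx).2
            exact Finset.mem_filter.mpr ⟨Finset.mem_univ _, hcon x hxO⟩
          obtain ⟨R', _, _, hcard'⟩ := pairing π hinv Fs hFsmem (fun x _ => hnefix x)
          have heven : Even Fs.card := ⟨R'.card, by omega⟩
          have hsetEq : {x : Y | x ∈ X ∧ x ∈ O} = ↑(X.filter (fun y => y ∈ O)) := by
            ext y
            simp [Finset.coe_filter]
          have hcardeq : (X.filter (fun y => y ∈ O)).card = Fs.card := by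
            apply Finset.card_bij
              (fun (y : Y) (hy : y ∈ X.filter (fun y => y ∈ O)) =>
                (⟨y, (Finset.mem_filter.mp hy).1⟩ : ↥X))
            · intro a ha
              exact Finset.mem_filter.mpr ⟨Finset.mem_univ _, (Finset.mem_filter.mp ha).2⟩
            · intro a₁ h₁ a₂ h₂ heq
              exact congrArg Subtype.val heq
            · intro b hb
              refine ⟨(b : Y), Finset.mem_filter.mpr ⟨b.2, (Finset.mem_filter.mp hb).2⟩, ?_⟩
              rfl
          rw [hsetEq, Set.ncard_coe_finset, hcardeq] at hodd
          exact (Nat.not_odd_iff_even.mpr heven) hodd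
        obtain ⟨ξ, hξO, hπξO⟩ := hexξ
        have hrep : ∃ r ∈ R,
            ((γ r 0 ∈ O ∧ γ r (L r) ∉ O) ∨ (γ r 0 ∉ O ∧ γ r (L r) ∈ O)) := by
          by_cases h1 : ξ ∈ R
          · refine ⟨ξ, h1, Or.inl ⟨?_, ?_⟩⟩
            · rw [hγ0]; exact hξO
            · rw [hγ1]; exact hπξO
          · have h2 : π ξ ∈ R := by
              by_contra h3
              exact h1 ((hRiff ξ (Finset.mem_univ _)).mpr h3)
            refine ⟨π ξ, h2, Or.inr ⟨?_, ?_⟩⟩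
            · rw [hγ0]; exact hπξO
            · rw [hγ1, hinv]; exact hξO
        obtain ⟨r, hrR, hcase⟩ := hrep
        refine ⟨r, hrR, ?_⟩
        by_contra hnc
        push_neg at hnc
        set G : Set Y := γ r '' Set.Icc 0 (L r) with hGdef
        have hGC : G ⊆ Cᶜ := by
          rintro _ ⟨s₀, hs₀, rfl⟩
          exact hnc s₀ hs₀
        have hGconn : IsPreconnected G := isPreconnected_Icc.image _ (hγcont r)
        have h0G : γ r 0 ∈ G := Set.mem_image_of_mem _ (Set.left_mem_Icc.mpr (hL0 r))
        have h1G : γ r (L r) ∈ G := Set.mem_image_of_mem _ (Set.right_mem_Icc.mpr (hL0 r))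
        have hGsubO : ∀ z ∈ G, z ∈ O → G ⊆ O := by
          intro z hzG hzO
          have h1 : G ⊆ connectedComponentIn Cᶜ z :=
            hGconn.subset_connectedComponentIn hzG hGC
          have h2 : connectedComponentIn Cᶜ q = connectedComponentIn Cᶜ z :=
            connectedComponentIn_eq hzO
          rw [hOdef, h2]
          exact h1
        rcases hcase with ⟨hin, hout⟩ | ⟨hout, hin⟩
        · exact hout (hGsubO _ h0G hin h1G)
        · exact hout (hGsubO _ h1G hin h0G)
      -- handle the degenerate case of empty X
      by_cases hXne : Nonempty ↥X
      swap
      · have hS0 : S = ∅ := by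
          ext C
          simp only [hSdef, Set.mem_setOf_eq, Set.mem_empty_iff_false, iff_false, not_and]
          rintro _ ⟨p, hp, hodd⟩
          have hempty : {x : Y | x ∈ X ∧ x ∈ connectedComponentIn Cᶜ p} = ∅ := by
            ext y
            simp only [Set.mem_setOf_eq, Set.mem_empty_iff_false, iff_false, not_and]
            intro hyX
            exact absurd ⟨⟨y, hyX⟩⟩ hXne
          rw [hempty, Set.ncard_empty] at hodd
          simp at hodd
        rw [hcut, hS0]
        simp
      -- step 2: choose an injection
      have hCsubA : ∀ C ∈ S, C ⊆ A := by
        intro C hC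
        obtain ⟨⟨p₀, hp₀A, hCeq⟩, _⟩ := hC
        rw [hCeq]
        exact connectedComponentIn_subset _ _
      have hchoice : ∀ C : Set Y, ∃ rK : ↥X × Set ℝ, C ∈ S →
          rK.1 ∈ R ∧ rK.2 ∈ comps rK.1 ∧ (γ rK.1 '' rK.2 ⊆ C) ∧ rK.2.Nonempty := by
        intro C
        by_cases hC : C ∈ S
        swap
        · exact ⟨(Classical.choice hXne, ∅), fun h => absurd h hC⟩
        have hCS := hC
        obtain ⟨r, hrR, s₀, hs₀, hγs₀⟩ := hstep C hC
        obtain ⟨⟨p₀, hp₀A, hCeq⟩, _⟩ := hCS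
        have hs₀B : s₀ ∈ B r := by
          refine ⟨hs₀, ?_⟩
          have : γ r s₀ ∈ A := hCsubA C hC hγs₀
          simpa [hBdef, hhdef, hAdef] using this
        set K : Set ℝ := connectedComponentIn (B r) s₀ with hKdef
        have hs₀K : s₀ ∈ K := mem_connectedComponentIn hs₀B
        refine ⟨(r, K), fun _ => ⟨hrR, ⟨s₀, hs₀B, rfl⟩, ?_, ⟨s₀, hs₀K⟩⟩⟩
        -- γ r '' K ⊆ C
        have hKconn : IsPreconnected K := isPreconnected_connectedComponentIn
        have hKsub : K ⊆ B r := connectedComponentIn_subset _ _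
        have hcontK : ContinuousOn (γ r) K :=
          (hγcont r).mono (hKsub.trans Set.inter_subset_left)
        have himg_conn : IsPreconnected (γ r '' K) := hKconn.image _ hcontK
        have himg_sub : γ r '' K ⊆ A := by
          rintro _ ⟨s, hsK, rfl⟩
          have := (hKsub hsK).2
          simpa [hBdef, hhdef, hAdef] using this
        have hγs₀img : γ r s₀ ∈ γ r '' K := Set.mem_image_of_mem _ hs₀K
        have h1 : γ r '' K ⊆ connectedComponentIn A (γ r s₀) :=
          himg_conn.subset_connectedComponentIn hγs₀img himg_sub
        have h2 : connectedComponentIn A p₀ = connectedComponentIn A (γ r s₀) := by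
          apply connectedComponentIn_eq
          rw [← hCeq]
          exact hγs₀
        rw [hCeq, h2]
        exact h1
      choose Φ hΦ using hchoice
      have hinj : Set.InjOn Φ S := by
        intro C hC C' hC' heq
        obtain ⟨h1, h2, h3, h4⟩ := hΦ C hC
        obtain ⟨h1', h2', h3', h4'⟩ := hΦ C' hC'
        obtain ⟨s, hs⟩ := h4
        have hz : γ (Φ C).1 s ∈ C := h3 (Set.mem_image_of_mem _ hs)
        have hz' : γ (Φ C).1 s ∈ C' := by
          rw [heq] at hs ⊢
          exact h3' (Set.mem_image_of_mem _ hs)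
        obtain ⟨⟨p₀, hp₀, hCeq⟩, _⟩ := hC
        obtain ⟨⟨p₀', hp₀', hCeq'⟩, _⟩ := hC'
        rw [hCeq, hCeq']
        apply compIn_eq_of_mem (q := γ (Φ C).1 s)
        · rw [← hCeq]; exact hz
        · rw [← hCeq']; exact hz'
      have hmaps : ∀ C ∈ S, Φ C ∈ ⋃ r ∈ R, Prod.mk r '' comps r := by
        intro C hC
        obtain ⟨h1, h2, _, _⟩ := hΦ C hC
        apply Set.mem_biUnion h1
        exact ⟨(Φ C).2, h2, rfl⟩
      have henc1 : S.encard ≤ (⋃ r ∈ R, Prod.mk r '' comps r).encard := by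
        rw [← hinj.encard_image]
        exact Set.encard_le_encard (Set.image_subset_iff.mpr hmaps)
      calc cutZ2 (g ⁻¹' {t}) X = ((S.encard : ℕ∞) : ℝ≥0∞) := hcut
        _ ≤ (((⋃ r ∈ R, Prod.mk r '' comps r).encard : ℕ∞) : ℝ≥0∞) :=
            ENat.toENNReal_le.mpr henc1
        _ ≤ ∑ r ∈ R, M r t := by
            apply encard_biUnion_le
            intro r hr
            have himg : (Prod.mk r '' comps r).encard = (comps r).encard :=
              Set.InjOn.encard_image (fun a _ b _ hab => congrArg Prod.snd hab)
            rw [himg]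
            exact hMbound r t
    -- integrate
    have hsum_eq : ∑ r ∈ R, L r = matchVal d π := by
      have hdisjRI : Disjoint R (R.image π) := by
        rw [Finset.disjoint_left]
        intro a haR haI
        obtain ⟨b, hbR, hba⟩ := Finset.mem_image.mp haI
        exact ((hRiff b (Finset.mem_univ b)).mp hbR) (hba ▸ haR)
      have hunion : (Finset.univ : Finset ↥X) = R ∪ R.image π := by
        ext a
        simp only [Finset.mem_univ, true_iff, Finset.mem_union, Finset.mem_image]
        by_cases h1 : a ∈ R
        · exact Or.inl h1
        · refine Or.inr ⟨π a, ?_, hinv a⟩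
          by_contra h2
          exact h1 ((hRiff a (Finset.mem_univ _)).mpr h2)
      have hsum : ∑ x, d x (π x) = (∑ r ∈ R, d r (π r)) + ∑ r ∈ R, d (π r) (π (π r)) := by
        rw [show (Finset.univ : Finset ↥X) = R ∪ R.image π from hunion,
          Finset.sum_union hdisjRI, Finset.sum_image
            (fun x _ y _ hxy => hinv.injective hxy)]
      have hsum2 : ∑ r ∈ R, d (π r) (π (π r)) = ∑ r ∈ R, d r (π r) := by
        apply Finset.sum_congr rfl
        intro r _
        rw [hinv r, hddef]
        exact dist_comm _ _
      rw [show matchVal d π = (∑ x, d x (π x)) / 2 from rfl, hsum, hsum2]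
      have : ∀ r ∈ R, L r = d r (π r) := fun r _ => rfl
      rw [Finset.sum_congr rfl this]
      ring
    calc (∫⁻ t : ℝ, cutZ2 (g ⁻¹' {t}) X)
        ≤ ∫⁻ t : ℝ, ∑ r ∈ R, M r t := MeasureTheory.lintegral_mono hpt
      _ = ∑ r ∈ R, ∫⁻ t, M r t :=
          MeasureTheory.lintegral_finset_sum _ (fun r _ => hMmeas r)
      _ ≤ ∑ r ∈ R, ENNReal.ofReal (L r) := Finset.sum_le_sum (fun r _ => hMint r)
      _ = ENNReal.ofReal (∑ r ∈ R, L r) :=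
          (ENNReal.ofReal_sum_of_nonneg (fun r _ => hL0 r)).symm
      _ = ENNReal.ofReal (matchVal d π) := by rw [hsum_eq]
  -- conclude via infimum
  obtain ⟨π₀, hπ₀⟩ := matching_exists (α := ↥X) (by rwa [Fintype.card_coe])
  have hSne : {r | ∃ π : ↥X → ↥X, IsMatching π ∧ r = matchVal d π}.Nonempty :=
    ⟨matchVal d π₀, π₀, hπ₀, rfl⟩
  have hne_top : (∫⁻ t : ℝ, cutZ2 (g ⁻¹' {t}) X) ≠ ⊤ :=
    ne_top_of_le_ne_top ENNReal.ofReal_ne_top (key π₀ hπ₀)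
  have hval_nonneg : ∀ π : ↥X → ↥X, 0 ≤ matchVal d π := by
    intro π
    apply div_nonneg _ (by norm_num)
    exact Finset.sum_nonneg (fun x _ => dist_nonneg)
  have htoReal : (∫⁻ t : ℝ, cutZ2 (g ⁻¹' {t}) X).toReal ≤ matchNum d := by
    unfold matchNum
    apply le_csInf hSne
    rintro b ⟨π, hπ, rfl⟩
    calc (∫⁻ t : ℝ, cutZ2 (g ⁻¹' {t}) X).toReal
        ≤ (ENNReal.ofReal (matchVal d π)).toReal :=
          ENNReal.toReal_mono ENNReal.ofReal_ne_top (key π hπ)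
      _ = matchVal d π := ENNReal.toReal_ofReal (hval_nonneg π)
  calc (∫⁻ t : ℝ, cutZ2 (g ⁻¹' {t}) X)
      = ENNReal.ofReal ((∫⁻ t : ℝ, cutZ2 (g ⁻¹' {t}) X).toReal) :=
        (ENNReal.ofReal_toReal hne_top).symm
    _ ≤ ENNReal.ofReal (matchNum d) := ENNReal.ofReal_le_ofReal htoReal
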